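/- Let A_1 = diag(1,-1), A_2 = [[0,1],[1,0]], τ ∈ ℂ with Re τ > 0, η ∈ ℝ, and ρ = √(τ²+η²) with Re ρ > 0. Then det(τI + ρA_1 + iηA_2) = 0, the kernel of L(τ,ρ,iη) = [[τ+ρ, iη],[iη, τ-ρ]] is spanned by Φ(τ,η) = (-iη, τ+ρ), and ρ is the unique root in {Re ρ > 0} of det L(τ,ρ,iη) = τ² - ρ² + η² = 0. Moreover if P = P* ≥ 0 is a 2×2 Hermitian matrix such that Φ(τ,η) is an eigenvector of A_1^{-1}P for all η ∈ ℝ (and some fixed Re τ > 0), then P = 0. -/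

import Mathlib

open Matrix
open scoped ComplexOrder

lemma exists_sqrt_pos_re (z : ℂ) (hz : z ≠ 0) (hπ : z.arg ≠ Real.pi) :
    ∃ w : ℂ, w ^ 2 = z ∧ 0 < w.re := by
  refine ⟨z ^ ((2 : ℕ)⁻¹ : ℂ), ?_, ?_⟩
  · exact_mod_cast Complex.cpow_nat_inv_pow z (by norm_num)
  · rw [Complex.cpow_def_of_ne_zero hz, Complex.exp_re]
    have him : (Complex.log z * ((2:ℕ):ℂ)⁻¹).im = z.arg / 2 := by
      simp [Complex.mul_im, Complex.log_im]
      ring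
    rw [him]
    have h1 : -(Real.pi / 2) < z.arg / 2 := by
      have := Complex.neg_pi_lt_arg z; linarith
    have h2 : z.arg / 2 < Real.pi / 2 := by
      have h := Complex.arg_le_pi z
      have : z.arg < Real.pi := lt_of_le_of_ne h hπ
      linarith
    have hcos : 0 < Real.cos (z.arg / 2) := Real.cos_pos_of_mem_Ioo ⟨h1, h2⟩
    positivity

theorem wave_layer_no_perfect_absorption (τ : ℂ) (hτ : 0 < τ.re)
    (η : ℝ) (ρ : ℂ) (hρ : ρ ^ 2 = τ ^ 2 + (η : ℂ) ^ 2) (hρre : 0 < ρ.re) :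
    (∀ ρ' : ℂ,
      (!![τ + ρ', Complex.I * η; Complex.I * η, τ - ρ']).det
        = τ ^ 2 - ρ' ^ 2 + (η : ℂ) ^ 2) ∧
    (!![τ + ρ, Complex.I * η; Complex.I * η, τ - ρ]).det = 0 ∧
    (∀ v : Fin 2 → ℂ,
      (!![τ + ρ, Complex.I * η; Complex.I * η, τ - ρ]).mulVec v = 0 ↔
        ∃ c : ℂ, v = c • ![-(Complex.I * η), τ + ρ]) ∧
    (∀ ρ' : ℂ, 0 < ρ'.re → τ ^ 2 - ρ' ^ 2 + (η : ℂ) ^ 2 = 0 → ρ' = ρ) ∧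
    (∀ P : Matrix (Fin 2) (Fin 2) ℂ, P.PosSemidef →
      (∀ η' : ℝ, ∀ ρ' : ℂ, ρ' ^ 2 = τ ^ 2 + (η' : ℂ) ^ 2 → 0 < ρ'.re →
        ∃ c : ℂ, ((!![(1 : ℂ), 0; 0, -1])⁻¹ * P).mulVec ![-(Complex.I * η'), τ + ρ']
          = c • ![-(Complex.I * η'), τ + ρ']) →
      P = 0) := by
  have hI2 : Complex.I ^ 2 = -1 := Complex.I_sq
  have hτ0 : τ ≠ 0 := by
    intro h; rw [h] at hτ; simp at hτ
  have hdet : ∀ ρ' : ℂ,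
      (!![τ + ρ', Complex.I * η; Complex.I * η, τ - ρ']).det
        = τ ^ 2 - ρ' ^ 2 + (η : ℂ) ^ 2 := by
    intro ρ'
    rw [Matrix.det_fin_two_of]
    linear_combination (-(η:ℂ)^2) * hI2
  have hτρ : τ + ρ ≠ 0 := by
    intro h
    have : (τ + ρ).re = 0 := by rw [h]; rfl
    simp [Complex.add_re] at this
    linarith
  refine ⟨hdet, ?_, ?_, ?_, ?_⟩
  · rw [hdet]; linear_combination -hρ
  · intro v
    constructor
    · intro hv
      have h0 := congrFun hv 0
      simp [Matrix.mulVec, dotProduct, Fin.sum_univ_two] at h0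
      refine ⟨v 1 / (τ + ρ), ?_⟩
      funext i
      fin_cases i <;>
        simp only [Fin.zero_eta, Fin.mk_one, Pi.smul_apply, smul_eq_mul,
          Matrix.cons_val_zero, Matrix.cons_val_one, Matrix.head_cons, Fin.isValue]
      · rw [eq_comm, div_mul_eq_mul_div, div_eq_iff hτρ]
        linear_combination -h0
      · field_simp
    · rintro ⟨c, rfl⟩
      funext i
      fin_cases i <;>
        simp only [Fin.zero_eta, Fin.mk_one, Matrix.mulVec, dotProduct,
          Fin.sum_univ_two, Pi.smul_apply, smul_eq_mul, Matrix.cons_val_zero,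
          Matrix.cons_val_one, Matrix.head_cons, Matrix.of_apply, Matrix.cons_val',
          Matrix.empty_val', Matrix.cons_val_fin_one, Pi.zero_apply, Fin.isValue,
          Matrix.vecHead, Matrix.vecTail]
      · ring
      · linear_combination (-c) * hρ + (-c * (η:ℂ)^2) * hI2
  · intro ρ' hre' heq
    have h2 : (ρ' - ρ) * (ρ' + ρ) = 0 := by linear_combination -heq - hρ
    rcases mul_eq_zero.mp h2 with h | h
    · exact sub_eq_zero.mp h
    · exfalso
      have : (ρ' + ρ).re = 0 := by rw [h]; rfl
      simp [Complex.add_re] at this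
      linarith
  · intro P hP hAll
    have hA : (!![(1 : ℂ), 0; 0, -1])⁻¹ = !![(1 : ℂ), 0; 0, -1] := by
      apply Matrix.inv_eq_right_inv
      rw [Matrix.mul_fin_two, Matrix.one_fin_two]
      norm_num
    have hM : !![(1 : ℂ), 0; 0, -1] * P = !![P 0 0, P 0 1; -(P 1 0), -(P 1 1)] := by
      ext i j
      fin_cases i <;> fin_cases j <;>
        simp [Matrix.mul_apply, Fin.sum_univ_two]
    -- η' = 0 gives P 0 1 = 0
    obtain ⟨c₀, hc₀⟩ := hAll 0 τ (by push_cast; ring) hτ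
    rw [hA, hM] at hc₀
    have h01 : P 0 1 = 0 := by
      have h := congrFun hc₀ 0
      simp [Matrix.mulVec, dotProduct, Fin.sum_univ_two] at h
      rcases h with h | h
      · exact h
      · exact absurd h hτ0
    have h10 : P 1 0 = 0 := by
      have h := congrFun (congrFun hP.1 1) 0
      rw [Matrix.conjTranspose_apply, h01] at h
      simpa using h.symm
    -- τ² + 1 is not zero and not a negative real
    have key : ∀ hre : (τ ^ 2 + 1).re ≤ 0, (τ ^ 2 + 1).im = 0 → False := by
      intro hre him
      have hre' : (τ ^ 2 + 1).re = τ.re * τ.re - τ.im * τ.im + 1 := by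
        simp [pow_two, Complex.add_re, Complex.mul_re, Complex.one_re]
      have him' : (τ ^ 2 + 1).im = τ.re * τ.im + τ.im * τ.re := by
        simp [pow_two, Complex.add_im, Complex.mul_im, Complex.one_im]
      rw [him'] at him
      have hτim : τ.im = 0 := by
        rcases mul_eq_zero.mp (by linarith : τ.re * τ.im = 0) with h' | h'
        · exact absurd h' (ne_of_gt hτ)
        · exact h'
      rw [hre', hτim] at hre
      nlinarith
    have hz : τ ^ 2 + 1 ≠ 0 := by
      intro h
      exact key (by rw [h]; norm_num) (by rw [h]; norm_num)
    have harg : (τ ^ 2 + 1).arg ≠ Real.pi := by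
      intro h
      rw [Complex.arg_eq_pi_iff] at h
      exact key (le_of_lt h.1) h.2
    obtain ⟨ρ₁, hρ₁, hρ₁re⟩ := exists_sqrt_pos_re (τ ^ 2 + 1) hz harg
    have hτρ₁ : τ + ρ₁ ≠ 0 := by
      intro h
      have : (τ + ρ₁).re = 0 := by rw [h]; rfl
      simp [Complex.add_re] at this
      linarith
    obtain ⟨c, hc⟩ := hAll 1 ρ₁ (by push_cast [one_pow]; exact hρ₁) hρ₁re
    rw [hA, hM] at hc
    have h0 := congrFun hc 0
    have h1 := congrFun hc 1
    simp only [Matrix.mulVec, dotProduct, Fin.sum_univ_two, Pi.smul_apply,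
      smul_eq_mul, Matrix.cons_val_zero, Matrix.cons_val_one, Matrix.head_cons,
      Matrix.of_apply, Matrix.cons_val', Matrix.empty_val', Matrix.cons_val_fin_one,
      Fin.isValue, Matrix.vecHead, Matrix.vecTail] at h0 h1
    have e0 : P 0 0 = c := by
      have hIne : -(Complex.I * ((1:ℝ):ℂ)) ≠ 0 := by simp [Complex.I_ne_zero]
      apply mul_right_cancel₀ hIne
      linear_combination (norm := (push_cast; ring)) h0 - (τ + ρ₁) * h01
    have e1 : -(P 1 1) = c := by
      apply mul_right_cancel₀ hτρ₁
      linear_combination (norm := (push_cast; ring)) h1 - Complex.I * ((1:ℝ):ℂ) * h10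
    have d0 : 0 ≤ P 0 0 := by
      have h := hP.dotProduct_mulVec_nonneg (Pi.single 0 1)
      simpa [dotProduct, Matrix.mulVec, Fin.sum_univ_two, Pi.single_apply] using h
    have d1 : 0 ≤ P 1 1 := by
      have h := hP.dotProduct_mulVec_nonneg (Pi.single 1 1)
      simpa [dotProduct, Matrix.mulVec, Fin.sum_univ_two, Pi.single_apply] using h
    have h00 : P 0 0 = 0 := by
      have hle : P 0 0 ≤ 0 := by
        rw [e0, ← e1]
        exact neg_nonpos_of_nonneg d1
      exact le_antisymm hle d0
    have h11 : P 1 1 = 0 := by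
      have : -(P 1 1) = 0 := by rw [e1, ← e0, h00]
      exact neg_eq_zero.mp this
    ext i j
    fin_cases i <;> fin_cases j <;> simp [h00, h01, h10, h11]
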